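/- arXiv:2602.02254 — 2 statements merged into one kernel-verified Lean document; each statement's English description precedes it below -/
import Mathlib

section
/- PDA certificate: Let I be a complete-list instance with n residents and n hospitals, and Î the prefix-truncated instance where hospital h keeps its top ρ_h choices. If a hospital h is left unmatched by resident-proposing deferred acceptance on Î, then h is under-predicted in I, i.e., the hospital-optimal stable matching μ*_H of I satisfies rank(L(h), μ*_H(h)) > ρ_h. -/
lemma prefix_indexOf_eq {α : Type*} [DecidableEq α] {l' l : List α} (hp : l' <+: l)
    {a : α} (ha : a ∈ l') : l'.idxOf a = l.idxOf a := by
  obtain ⟨t, rfl⟩ := hp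
  exact (List.idxOf_append_of_mem ha).symm

lemma mem_take_of_indexOf_lt {α : Type*} [DecidableEq α] {l : List α} {a : α} {n : ℕ}
    (ha : a ∈ l) (hlt : l.idxOf a < n) : a ∈ l.take n := by
  have hl : l.idxOf a < l.length := List.idxOf_lt_length_iff.2 ha
  have hlen : l.idxOf a < (l.take n).length := by
    simp [List.length_take]; omega
  have : (l.take n)[l.idxOf a] = a := by
    rw [List.getElem_take]; exact List.getElem_idxOf hl
  exact this ▸ List.getElem_mem hlen

lemma indexOf_lt_of_mem_take {α : Type*} [DecidableEq α] {l : List α} {a : α} {n : ℕ}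
    (ha : a ∈ l.take n) : l.idxOf a < n := by
  have h1 : (l.take n).idxOf a = l.idxOf a :=
    prefix_indexOf_eq (List.take_prefix n l) ha
  have h2 : (l.take n).idxOf a < (l.take n).length := List.idxOf_lt_length_iff.2 ha
  have h3 : (l.take n).length ≤ n := by simp [List.length_take]
  omega

lemma sublist_indexOf_lt {α : Type*} [DecidableEq α] {l' l : List α} (hs : List.Sublist l' l)
    (hn : l.Nodup) : ∀ {a b : α}, a ∈ l' → b ∈ l' →
    l'.idxOf a < l'.idxOf b → l.idxOf a < l.idxOf b := by
  induction hs with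
  | slnil => intro a b ha; simp at ha
  | cons x hs ih =>
      intro a b ha hb hab
      rename_i l₁ l₂
      have hn' : l₂.Nodup := (List.nodup_cons.1 hn).2
      have hx : x ∉ l₂ := (List.nodup_cons.1 hn).1
      have hax : a ≠ x := fun h => hx (h ▸ hs.mem ha)
      have hbx : b ≠ x := fun h => hx (h ▸ hs.mem hb)
      rw [List.idxOf_cons_ne _ (Ne.symm hax), List.idxOf_cons_ne _ (Ne.symm hbx)]
      exact Nat.succ_lt_succ (ih hn' ha hb hab)
  | cons_cons x hs ih =>
      intro a b ha hb hab
      rename_i l₁ l₂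
      have hn' : l₂.Nodup := (List.nodup_cons.1 hn).2
      by_cases hax : a = x
      · subst hax
        have hbx : b ≠ a := by
          intro h; subst h; simp [List.idxOf_cons_self] at hab
        rw [List.idxOf_cons_self, List.idxOf_cons_ne _ (Ne.symm hbx)]
        omega
      · have hbx : b ≠ x := by
          intro h; subst h
          rw [List.idxOf_cons_self] at hab; omega
        have ha' : a ∈ l₁ := by
          rcases List.mem_cons.1 ha with h | h; exact absurd h hax; exact h
        have hb' : b ∈ l₁ := by
          rcases List.mem_cons.1 hb with h | h; exact absurd h hbx; exact h
        rw [List.idxOf_cons_ne _ (Ne.symm hax), List.idxOf_cons_ne _ (Ne.symm hbx)] at hab ⊢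
        exact Nat.succ_lt_succ (ih hn' ha' hb' (by omega))



/-- A stable matching instance: each resident has a preference list over hospitals
and each hospital has a preference list over residents. -/
structure SMInstance (R H : Type*) where
  Lr : R → List H
  Lh : H → List R

/-- A (partial) matching, given by mutually consistent partner functions. -/
structure SMatching (R H : Type*) where
  mr : R → Option H
  mh : H → Option R
  consistent : ∀ r h, mr r = some h ↔ mh h = some r

/-- An agent with preference list `l`, currently matched according to `o`,
strictly prefers `x` to its current situation: `x` is acceptable, and the agent
is either unmatched or ranks `x` above its current partner. -/
def prefersOver {α : Type*} [DecidableEq α] (l : List α) (x : α) (o : Option α) : Prop :=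
  x ∈ l ∧ ∀ y, o = some y → l.idxOf x < l.idxOf y

/-- With respect to list `l`, outcome `o₁` is weakly preferred to outcome `o₂`:
whenever `o₂` is matched, so is `o₁`, to a partner of weakly better rank. -/
def weaklyPrefers {α : Type*} [DecidableEq α] (l : List α) (o₁ o₂ : Option α) : Prop :=
  ∀ y, o₂ = some y → ∃ x, o₁ = some x ∧ l.idxOf x ≤ l.idxOf y

variable {R H : Type*} [DecidableEq R] [DecidableEq H]

/-- `(r, h)` is a blocking pair for `μ` in instance `I`. -/
def SMInstance.Blocking (I : SMInstance R H) (μ : SMatching R H) (r : R) (h : H) : Prop :=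
  prefersOver (I.Lr r) h (μ.mr r) ∧ prefersOver (I.Lh h) r (μ.mh h)

/-- The matching `μ` exists in the instance `I`: matched partners are on each other's lists. -/
def SMInstance.ExistsIn (I : SMInstance R H) (μ : SMatching R H) : Prop :=
  (∀ r h, μ.mr r = some h → h ∈ I.Lr r) ∧ (∀ h r, μ.mh h = some r → r ∈ I.Lh h)

/-- `μ` is stable in `I`: it exists in `I` and admits no blocking pair. -/
def SMInstance.IsStable (I : SMInstance R H) (μ : SMatching R H) : Prop :=
  I.ExistsIn μ ∧ ∀ r h, ¬ I.Blocking μ r h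

/-- Preference lists are strict (no repetitions). -/
def SMInstance.Nodups (I : SMInstance R H) : Prop :=
  (∀ r, (I.Lr r).Nodup) ∧ (∀ h, (I.Lh h).Nodup)

/-- Preference lists are complete: every agent ranks every agent on the other side. -/
def SMInstance.Complete (I : SMInstance R H) : Prop :=
  (∀ r h, h ∈ I.Lr r) ∧ (∀ h r, r ∈ I.Lh h)

/-- **PDA certificate.** If a hospital `h` is left unmatched by the
resident-optimal stable matching `muHat` of the prefix-truncated instance `Ihat` (the output
of resident-proposing deferred acceptance on `Ihat`), then `h` is under-predicted: the rank
of its partner in the hospital-optimal stable matching `muH` of `I` exceeds `ρ h`. -/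
theorem PDA_unmatched_implies_underpredicted
    {R H : Type*} [DecidableEq R] [DecidableEq H] [Fintype R] [Fintype H]
    (hcard : Fintype.card R = Fintype.card H)
    (I Ihat : SMInstance R H) (hC : I.Complete) (hN : I.Nodups)
    (ρ : H → ℕ)
    (hLh : ∀ h, Ihat.Lh h = (I.Lh h).take (ρ h))
    (hLr : ∀ r, Ihat.Lr r = (I.Lr r).filter (fun h => decide (r ∈ Ihat.Lh h)))
    (muH : SMatching R H) (hHstab : I.IsStable muH)
    (hHopt : ∀ ν : SMatching R H, I.IsStable ν →
      ∀ h, weaklyPrefers (I.Lh h) (muH.mh h) (ν.mh h))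
    (muHat : SMatching R H) (hhat : Ihat.IsStable muHat)
    (hropt : ∀ ν : SMatching R H, Ihat.IsStable ν →
      ∀ r, weaklyPrefers (Ihat.Lr r) (muHat.mr r) (ν.mr r))
    (h : H) (hun : muHat.mh h = none) :
    ∀ r, muH.mh h = some r → ρ h < (I.Lh h).idxOf r + 1 := by
  classical
  intro r hr
  by_contra hcon
  push_neg at hcon
  have hidx : (I.Lh h).idxOf r < ρ h := by omega
  -- membership in truncated lists of a hospital's partner
  have hmemIhatLr : ∀ (r' : R) (h' : H), r' ∈ Ihat.Lh h' → h' ∈ Ihat.Lr r' := by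
    intro r' h' hm
    rw [hLr]
    simp only [List.mem_filter, decide_eq_true_eq]
    exact ⟨hC.1 r' h', hm⟩
  -- the property P : resident strictly prefers its muHat partner to its muH partner (in I)
  set P : R → Prop := fun r' => ∃ h' hp, muHat.mr r' = some h' ∧ muH.mr r' = some hp ∧
      (I.Lr r').idxOf h' < (I.Lr r').idxOf hp with hP
  -- base case : P r
  have hrmemhat : r ∈ Ihat.Lh h := by
    rw [hLh]; exact mem_take_of_indexOf_lt (hC.2 h r) hidx
  have hPr : P r := by
    have hnb : ¬ (prefersOver (Ihat.Lr r) h (muHat.mr r) ∧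
        prefersOver (Ihat.Lh h) r (muHat.mh h)) := hhat.2 r h
    have hpr2 : prefersOver (Ihat.Lh h) r (muHat.mh h) :=
      ⟨hrmemhat, by intro y hy; rw [hun] at hy; cases hy⟩
    have h1 : ¬ prefersOver (Ihat.Lr r) h (muHat.mr r) := fun hp => hnb ⟨hp, hpr2⟩
    rw [prefersOver] at h1
    push_neg at h1
    obtain ⟨y, hy, hyle⟩ := h1 (hmemIhatLr r h hrmemhat)
    have hyne : y ≠ h := by
      intro he; subst he
      exact absurd ((muHat.consistent r y).1 hy) (by rw [hun]; simp)
    have hymem : y ∈ Ihat.Lr r := hhat.1.1 r y hy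
    have hhmem : h ∈ Ihat.Lr r := hmemIhatLr r h hrmemhat
    have hnodup : (Ihat.Lr r).Nodup := by rw [hLr]; exact (hN.1 r).filter _
    have hstrict : (Ihat.Lr r).idxOf y < (Ihat.Lr r).idxOf h := by
      rcases lt_or_eq_of_le hyle with hlt | heq
      · exact hlt
      · exact absurd ((List.idxOf_inj hymem).1 heq) hyne
    have hsub : List.Sublist (Ihat.Lr r) (I.Lr r) := by
      rw [hLr]; exact List.filter_sublist
    exact ⟨y, h, hy, (muH.consistent r h).2 hr,
      sublist_indexOf_lt hsub (hN.1 r) hymem hhmem hstrict⟩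
  -- the step : from P r' holding via (h', hp), muH.mh h' = some r'' with P r''
  have step : ∀ (r' : R) (h' hp : H), muHat.mr r' = some h' → muH.mr r' = some hp →
      (I.Lr r').idxOf h' < (I.Lr r').idxOf hp →
      ∃ r'', muH.mh h' = some r'' ∧ P r'' := by
    intro r' h' hp hmhat hmH hlt
    -- (r', h') is not blocking for muH in I
    have hnb : ¬ (prefersOver (I.Lr r') h' (muH.mr r') ∧
        prefersOver (I.Lh h') r' (muH.mh h')) := hHstab.2 r' h'
    have hpr1 : prefersOver (I.Lr r') h' (muH.mr r') := by
      refine ⟨hC.1 r' h', ?_⟩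
      intro y hy; rw [hmH] at hy; injection hy with hy; subst hy; exact hlt
    have h2 : ¬ prefersOver (I.Lh h') r' (muH.mh h') := fun hq => hnb ⟨hpr1, hq⟩
    rw [prefersOver] at h2
    push_neg at h2
    obtain ⟨r'', hr'', hr''le⟩ := h2 (hC.2 h' r')
    have hr''ne : r'' ≠ r' := by
      intro he; subst he
      have : muH.mr r'' = some h' := (muH.consistent r'' h').2 hr''
      rw [hmH] at this; injection this with this
      subst this; omega
    have hr''lt : (I.Lh h').idxOf r'' < (I.Lh h').idxOf r' := by
      rcases lt_or_eq_of_le hr''le with hl | he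
      · exact hl
      · exact absurd ((List.idxOf_inj (hC.2 h' r'')).1 he) hr''ne
    -- r' is on Ihat's list of h', hence so is r''
    have hr'memhat : r' ∈ Ihat.Lh h' := hhat.1.2 h' r' ((muHat.consistent r' h').1 hmhat)
    have hr'idx : (I.Lh h').idxOf r' < ρ h' := by
      rw [hLh] at hr'memhat; exact indexOf_lt_of_mem_take hr'memhat
    have hr''memhat : r'' ∈ Ihat.Lh h' := by
      rw [hLh]; exact mem_take_of_indexOf_lt (hC.2 h' r'') (by omega)
    -- (r'', h') is not blocking for muHat in Ihat
    have hnb2 : ¬ (prefersOver (Ihat.Lr r'') h' (muHat.mr r'') ∧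
        prefersOver (Ihat.Lh h') r'' (muHat.mh h')) := hhat.2 r'' h'
    have hpr2 : prefersOver (Ihat.Lh h') r'' (muHat.mh h') := by
      refine ⟨hr''memhat, ?_⟩
      intro y hy
      rw [(muHat.consistent r' h').1 hmhat] at hy
      injection hy with hy; subst hy
      rw [hLh, prefix_indexOf_eq (List.take_prefix _ _) (by rw [hLh] at hr''memhat; exact hr''memhat),
        prefix_indexOf_eq (List.take_prefix _ _) (by rw [hLh] at hr'memhat; exact hr'memhat)]
      exact hr''lt
    have h3 : ¬ prefersOver (Ihat.Lr r'') h' (muHat.mr r'') := fun hq => hnb2 ⟨hq, hpr2⟩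
    rw [prefersOver] at h3
    push_neg at h3
    obtain ⟨h''', hmh''', hh'''le⟩ := h3 (hmemIhatLr r'' h' hr''memhat)
    have hne : h''' ≠ h' := by
      intro he; subst he
      have : muHat.mh h''' = some r'' := (muHat.consistent r'' h''').1 hmh'''
      rw [(muHat.consistent r' h''').1 hmhat] at this
      injection this with this; exact hr''ne this.symm
    have hmem1 : h''' ∈ Ihat.Lr r'' := hhat.1.1 r'' h''' hmh'''
    have hmem2 : h' ∈ Ihat.Lr r'' := hmemIhatLr r'' h' hr''memhat
    have hstrict : (Ihat.Lr r'').idxOf h''' < (Ihat.Lr r'').idxOf h' := by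
      rcases lt_or_eq_of_le hh'''le with hl | he
      · exact hl
      · exact absurd ((List.idxOf_inj hmem1).1 he) hne
    have hsub : List.Sublist (Ihat.Lr r'') (I.Lr r'') := by
      rw [hLr]; exact List.filter_sublist
    exact ⟨r'', hr'', h''', h', hmh''', (muH.consistent r'' h').2 hr'',
      sublist_indexOf_lt hsub (hN.1 r'') hmem1 hmem2 hstrict⟩
  -- finite set argument
  set S : Finset R := Finset.univ.filter P with hS
  set f : R → R := fun r' => ((muHat.mr r').bind muH.mh).getD r' with hf
  have hfval : ∀ r' ∈ S, ∃ h' : H, muHat.mr r' = some h' ∧ muH.mh h' = some (f r') ∧ P (f r') := by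
    intro r' hr'
    rw [hS, Finset.mem_filter] at hr'
    obtain ⟨h', hp, h1, h2, h3⟩ := hr'.2
    obtain ⟨r'', hr''1, hr''2⟩ := step r' h' hp h1 h2 h3
    have : f r' = r'' := by rw [hf]; simp [h1, hr''1]
    rw [this]
    exact ⟨h', h1, hr''1, hr''2⟩
  have hmaps : ∀ r' ∈ S, f r' ∈ S := by
    intro r' hr'
    obtain ⟨h', _, _, hp⟩ := hfval r' hr'
    rw [hS, Finset.mem_filter]; exact ⟨Finset.mem_univ _, hp⟩
  have hinj : Set.InjOn f S := by
    intro r1 h1 r2 h2 heq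
    obtain ⟨a1, ha1, hb1, _⟩ := hfval r1 h1
    obtain ⟨a2, ha2, hb2, _⟩ := hfval r2 h2
    rw [heq] at hb1
    have : muH.mr (f r2) = some a1 := (muH.consistent _ _).2 hb1
    rw [(muH.consistent _ _).2 hb2] at this
    injection this with this
    subst this
    have e1 := (muHat.consistent _ _).1 ha1
    rw [(muHat.consistent _ _).1 ha2] at e1
    injection e1 with e1
    exact e1.symm
  have himg : S.image f = S := by
    apply Finset.eq_of_subset_of_card_le
    · intro x hx
      rw [Finset.mem_image] at hx
      obtain ⟨y, hy, rfl⟩ := hx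
      exact hmaps y hy
    · rw [Finset.card_image_of_injOn hinj]
  have hrS : r ∈ S := by rw [hS, Finset.mem_filter]; exact ⟨Finset.mem_univ _, hPr⟩
  rw [← himg, Finset.mem_image] at hrS
  obtain ⟨r0, hr0S, hr0⟩ := hrS
  obtain ⟨h0, hm0, hmh0, _⟩ := hfval r0 hr0S
  rw [hr0] at hmh0
  -- muH.mh h0 = some r and muH.mh h = some r force h0 = h
  have : muH.mr r = some h0 := (muH.consistent _ _).2 hmh0
  rw [(muH.consistent _ _).2 hr] at this
  injection this with this
  subst this
  have h5 := (muHat.consistent _ _).1 hm0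
  rw [hun] at h5
  cases h5
end

section
/- Proposal bound for PDA: If the prefix-truncated instance Î admits a stable matching of the original instance, then the number of proposals made by resident-proposing deferred acceptance on Î is at most min over stable matchings M of Î of Σ_h [ρ_h − rank(L̂(h), M(h)) + 1], where ρ_h is the length of hospital h's truncated list. -/
/-- One step of deferred acceptance with proposers' lists `Lp` and receivers' lists `Lq`.
The state consists of, for each proposer, the index of its next proposal, and, for each
receiver, its tentatively held proposer.  An unmatched proposer with proposals remaining
proposes to the next entry of its list; the receiver keeps the better of its tentative
partner and the new proposer. -/
def daStep (n : ℕ) (Lp Lq : Fin n → List (Fin n))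
    (s : (Fin n → ℕ) × (Fin n → Option (Fin n))) :
    (Fin n → ℕ) × (Fin n → Option (Fin n)) :=
  match (List.finRange n).find?
      (fun p => decide ((∀ q, s.2 q ≠ some p) ∧ s.1 p < (Lp p).length)) with
  | none => s
  | some p =>
    match (Lp p)[s.1 p]? with
    | none => s
    | some q =>
      let next' := Function.update s.1 p (s.1 p + 1)
      match s.2 q with
      | none => (next', Function.update s.2 q (some p))
      | some p' =>
        if (Lq q).idxOf p < (Lq q).idxOf p' then
          (next', Function.update s.2 q (some p))
        else (next', s.2)

/-- Run `k` steps of deferred acceptance from the initial state. -/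
def daRun (n : ℕ) (Lp Lq : Fin n → List (Fin n)) :
    ℕ → (Fin n → ℕ) × (Fin n → Option (Fin n))
  | 0 => (fun _ => 0, fun _ => none)
  | k + 1 => daStep n Lp Lq (daRun n Lp Lq k)

/-- The partner of proposer `p` induced by the receivers' held proposers. -/
def partnerOf (n : ℕ) (held : Fin n → Option (Fin n)) (p : Fin n) : Option (Fin n) :=
  (List.finRange n).find? (fun q => held q == some p)

/-- `(r, h)` is a blocking pair with respect to the partner functions `mr`, `mh`. -/
def Blocking {n : ℕ} (Lr Lh : Fin n → List (Fin n))
    (mr mh : Fin n → Option (Fin n)) (r h : Fin n) : Prop :=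
  prefersOver (Lr r) h (mr r) ∧ prefersOver (Lh h) r (mh h)

/-- The rank (1-based) of an optional partner on a list; `0` if unmatched. -/
def orank {α : Type*} [DecidableEq α] (l : List α) : Option α → ℤ
  | none => 0
  | some a => l.idxOf a + 1

/-- The invariant maintained by deferred acceptance, relative to a stable matching
`(μr, μh)`: pointers stay in range, a held proposer's pointer is just past the holder,
and no proposer has been rejected by its `μ`-partner. -/
def DAInv {n : ℕ} (Lp : Fin n → List (Fin n)) (μr : Fin n → Option (Fin n))
    (s : (Fin n → ℕ) × (Fin n → Option (Fin n))) : Prop :=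
  (∀ r, s.1 r ≤ (Lp r).length) ∧
  (∀ q p, s.2 q = some p → s.1 p = (Lp p).idxOf q + 1) ∧
  (∀ r q, μr r = some q → (Lp r).idxOf q < s.1 r → s.2 q = some r)

section Aux

variable {n : ℕ} {Lp Lq : Fin n → List (Fin n)} {μr μh : Fin n → Option (Fin n)}

lemma indexOf_inj {l : List (Fin n)} {a b : Fin n} (ha : a ∈ l)
    (hab : l.idxOf a = l.idxOf b) : a = b := by
  have h1 : l.idxOf a < l.length := List.idxOf_lt_length_iff.2 ha
  have e1 : l[l.idxOf a] = a := List.getElem_idxOf h1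
  have h2 : l.idxOf b < l.length := hab ▸ h1
  have e2 : l[l.idxOf b] = b := List.getElem_idxOf h2
  have e3 : l[l.idxOf a]'h1 = l[l.idxOf b]'h2 := by simp_rw [hab]
  rw [e1, e2] at e3
  exact e3

lemma daStep_inv
    (hNp : ∀ r, (Lp r).Nodup) (hNq : ∀ h, (Lq h).Nodup)
    (hfilt : ∀ r h, h ∈ Lp r → r ∈ Lq h)
    (hbij : ∀ r h, μr r = some h ↔ μh h = some r)
    (hdomh : ∀ h r, μh h = some r → r ∈ Lq h)
    (hdomr : ∀ r h, μr r = some h → h ∈ Lp r)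
    (hstab : ∀ r h, ¬ Blocking Lp Lq μr μh r h)
    (s : (Fin n → ℕ) × (Fin n → Option (Fin n)))
    (hI : DAInv Lp μr s) : DAInv Lp μr (daStep n Lp Lq s) := by
  obtain ⟨Ia, Ib, Ic⟩ := hI
  unfold daStep
  split
  · exact ⟨Ia, Ib, Ic⟩
  rename_i p hfind
  have hp := List.find?_some hfind
  simp only [decide_eq_true_eq] at hp
  obtain ⟨hpun, hplt⟩ := hp
  split
  · exact ⟨Ia, Ib, Ic⟩
  rename_i q hq
  obtain ⟨hlt, hget⟩ := List.getElem?_eq_some_iff.1 hq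
  have hidx : (Lp p).idxOf q = s.1 p := hget ▸ List.Nodup.idxOf_getElem (hNp p) _ hlt
  have hqmem : q ∈ Lp p := hget ▸ List.getElem_mem hlt
  have hpLq : p ∈ Lq q := hfilt p q hqmem
  -- common facts for the new pointer function
  have hIa' : ∀ r, Function.update s.1 p (s.1 p + 1) r ≤ (Lp r).length := by
    intro r
    rcases eq_or_ne r p with rfl | hne
    · rw [Function.update_self]; omega
    · rw [Function.update_of_ne hne]; exact Ia r
  -- the key fact used for `Ic` when the proposer is `p` itself
  have hIcP : ∀ q0, μr p = some q0 → (Lp p).idxOf q0 < s.1 p + 1 → q0 = q := by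
    intro q0 hm hlt'
    rcases lt_or_eq_of_le (Nat.lt_succ_iff.1 hlt') with h1 | h1
    · exact absurd (Ic p q0 hm h1) (hpun q0)
    · exact indexOf_inj (hdomr p q0 hm) (h1.trans hidx.symm)
  -- `prefersOver (Lp p) q (μr p)` holds whenever `μh q ≠ some p`
  have hprefP : (∀ y, μh q ≠ some y ∨ y ≠ p) → prefersOver (Lp p) q (μr p) := by
    intro hne
    refine ⟨hqmem, fun y hy => ?_⟩
    rcases lt_trichotomy ((Lp p).idxOf y) ((Lp p).idxOf q) with h1 | h1 | h1
    · exact absurd (Ic p y hy (hidx ▸ h1)) (hpun y)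
    · have : y = q := indexOf_inj (hdomr p y hy) h1
      subst this
      have := (hbij p y).1 hy
      rcases hne p with h2 | h2
      · exact absurd this h2
      · exact absurd rfl h2
    · exact h1
  split
  · -- q was unmatched, accepts p
    rename_i hheld
    dsimp only [DAInv]
    refine ⟨hIa', ?_, ?_⟩
    · intro q0 p0 h0
      try dsimp only at h0 ⊢
      rcases eq_or_ne q0 q with rfl | hne
      · rw [Function.update_self] at h0
        cases h0
        rw [Function.update_self, hidx]
      · rw [Function.update_of_ne hne] at h0
        have hp0 : p0 ≠ p := by rintro rfl; exact hpun q0 h0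
        rw [Function.update_of_ne hp0]
        exact Ib q0 p0 h0
    · intro r q0 hm hlt'
      try dsimp only at hlt' ⊢
      rcases eq_or_ne r p with rfl | hne
      · rw [Function.update_self] at hlt'
        have : q0 = q := hIcP q0 hm hlt'
        subst this
        rw [Function.update_self]
      · rw [Function.update_of_ne hne] at hlt'
        have h0 := Ic r q0 hm hlt'
        rcases eq_or_ne q0 q with rfl | hne'
        · rw [hheld] at h0; exact absurd h0 (by simp)
        · rw [Function.update_of_ne hne']
          exact h0
  · -- q held p'
    rename_i p' hheld
    dsimp only [DAInv]
    split
    · -- p is better, q accepts p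
      rename_i hbetter
      refine ⟨hIa', ?_, ?_⟩
      · intro q0 p0 h0
        try dsimp only at h0 ⊢
        rcases eq_or_ne q0 q with rfl | hne
        · rw [Function.update_self] at h0
          cases h0
          rw [Function.update_self, hidx]
        · rw [Function.update_of_ne hne] at h0
          have hp0 : p0 ≠ p := by rintro rfl; exact hpun q0 h0
          rw [Function.update_of_ne hp0]
          exact Ib q0 p0 h0
      · intro r q0 hm hlt'
        try dsimp only at hlt' ⊢
        rcases eq_or_ne r p with rfl | hne
        · rw [Function.update_self] at hlt'
          have : q0 = q := hIcP q0 hm hlt'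
          subst this
          rw [Function.update_self]
        · rw [Function.update_of_ne hne] at hlt'
          have h0 := Ic r q0 hm hlt'
          rcases eq_or_ne q0 q with rfl | hne'
          · -- p displaces r = μ-partner of q; (p, q) blocks μ
            exfalso
            rw [hheld] at h0
            rw [Option.some.inj h0] at hbetter
            have hmq : μh q0 = some r := (hbij r q0).1 hm
            refine hstab p q0 ⟨hprefP ?_, ⟨hpLq, fun y hy => ?_⟩⟩
            · intro y
              rcases eq_or_ne y p with rfl | h2
              · left; rw [hmq]; simp; rintro rfl; exact hne rfl
              · right; exact h2
            · rw [hmq] at hy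
              rw [← Option.some.inj hy]
              exact hbetter
          · rw [Function.update_of_ne hne']
            exact h0
    · -- p is worse, q keeps p'
      rename_i hworse
      refine ⟨hIa', ?_, ?_⟩
      · intro q0 p0 h0
        try dsimp only at h0 ⊢
        have hp0 : p0 ≠ p := by rintro rfl; exact hpun q0 h0
        rw [Function.update_of_ne hp0]
        exact Ib q0 p0 h0
      · intro r q0 hm hlt'
        try dsimp only at hlt' ⊢
        rcases eq_or_ne r p with heq | hne
        · rw [heq] at hm hlt' ⊢
          rw [Function.update_self] at hlt'
          have : q0 = q := hIcP q0 hm hlt'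
          subst this
          -- μh q0 = some p, but q0 keeps p'; (p', q0) blocks μ
          exfalso
          have hmq : μh q0 = some p := (hbij p q0).1 hm
          have hIb' := Ib q0 p' hheld
          have hq0lt : (Lp p').idxOf q0 < s.1 p' := by omega
          have hq0mem : q0 ∈ Lp p' := by
            have := Ia p'
            exact List.idxOf_lt_length_iff.1 (by omega)
          have hp'ne : p' ≠ p := by rintro rfl; exact hpun q0 hheld
          have hp'mem : p' ∈ Lq q0 := hfilt p' q0 hq0mem
          refine hstab p' q0 ⟨⟨hq0mem, fun y hy => ?_⟩, ⟨hp'mem, fun y hy => ?_⟩⟩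
          · rcases lt_trichotomy ((Lp p').idxOf y) ((Lp p').idxOf q0) with h1 | h1 | h1
            · have h2 := Ic p' y hy (by omega)
              have h3 := Ib y p' h2
              omega
            · have : y = q0 := indexOf_inj (hdomr p' y hy) h1
              subst this
              have h4 := (hbij p' y).1 hy
              rw [hmq] at h4
              exact absurd (Option.some.inj h4).symm hp'ne
            · exact h1
          · rw [hmq] at hy
            rw [← Option.some.inj hy]
            have h2 : (Lq q0).idxOf p' ≤ (Lq q0).idxOf p := by omega
            rcases lt_or_eq_of_le h2 with h3 | h3
            · exact h3
            · exact absurd (indexOf_inj hp'mem h3) hp'ne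
        · rw [Function.update_of_ne hne] at hlt'
          exact Ic r q0 hm hlt'

lemma daRun_inv
    (hNp : ∀ r, (Lp r).Nodup) (hNq : ∀ h, (Lq h).Nodup)
    (hfilt : ∀ r h, h ∈ Lp r → r ∈ Lq h)
    (hbij : ∀ r h, μr r = some h ↔ μh h = some r)
    (hdomh : ∀ h r, μh h = some r → r ∈ Lq h)
    (hdomr : ∀ r h, μr r = some h → h ∈ Lp r)
    (hstab : ∀ r h, ¬ Blocking Lp Lq μr μh r h)
    (k : ℕ) : DAInv Lp μr (daRun n Lp Lq k) := by
  induction k with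
  | zero =>
    refine ⟨fun r => Nat.zero_le _, fun q p h => by simp [daRun] at h, fun r q _ h => ?_⟩
    simp [daRun] at h
  | succ k ih =>
    exact daStep_inv hNp hNq hfilt hbij hdomh hdomr hstab _ ih

end Aux

/-- **Proposal bound for PDA.** If the prefix-truncated instance admits a
stable matching of the original complete-list instance, then the number of proposals made
by resident-proposing deferred acceptance on the truncated instance is at most
`Σ_h (ρ_h − rank(L̂(h), M(h)) + 1)` for every stable matching `M` of the truncated
instance (hence at most the minimum over all of them). -/
theorem PDA_proposal_bound
    (n : ℕ) (Lr Lh : Fin n → List (Fin n))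
    (hNr : ∀ r, (Lr r).Nodup) (hNh : ∀ h, (Lh h).Nodup)
    (hCr : ∀ r h, h ∈ Lr r) (hCh : ∀ h r, r ∈ Lh h)
    (ρ : Fin n → ℕ) (hρ : ∀ h, ρ h ≤ (Lh h).length)
    (Lh' Lr' : Fin n → List (Fin n))
    (hLh' : ∀ h, Lh' h = (Lh h).take (ρ h))
    (hLr' : ∀ r, Lr' r = (Lr r).filter (fun h => decide (r ∈ Lh' h)))
    (hprom : ∃ μr μh : Fin n → Option (Fin n),
      (∀ r h, μr r = some h ↔ μh h = some r) ∧
      (∀ r h, ¬ Blocking Lr Lh μr μh r h) ∧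
      (∀ h r, μh h = some r → r ∈ Lh' h)) :
    ∀ μr μh : Fin n → Option (Fin n),
      (∀ r h, μr r = some h ↔ μh h = some r) →
      (∀ h r, μh h = some r → r ∈ Lh' h) →
      (∀ r h, μr r = some h → h ∈ Lr' r) →
      (∀ r h, ¬ Blocking Lr' Lh' μr μh r h) →
      ((∑ r : Fin n, (daRun n Lr' Lh' ((∑ r : Fin n, (Lr' r).length) + 1)).1 r : ℕ) : ℤ) ≤
        ∑ h : Fin n, ((ρ h : ℤ) - orank (Lh' h) (μh h) + 1) := by
  intro μr μh hbij hdomh hdomr hstab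
  -- basic structural facts about the truncated lists
  have hNr' : ∀ r, (Lr' r).Nodup := fun r => (hLr' r) ▸ (hNr r).filter _
  have hNh' : ∀ h, (Lh' h).Nodup := fun h =>
    (hLh' h) ▸ ((List.take_sublist _ _).nodup (hNh h))
  have hlen' : ∀ h, (Lh' h).length ≤ ρ h := fun h => by
    rw [hLh' h, List.length_take]; exact min_le_left _ _
  have hfilt : ∀ r h, h ∈ Lr' r → r ∈ Lh' h := by
    intro r h hm
    rw [hLr' r, List.mem_filter] at hm
    exact of_decide_eq_true hm.2
  set s := daRun n Lr' Lh' ((∑ r : Fin n, (Lr' r).length) + 1) with hs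
  obtain ⟨Ia, Ib, Ic⟩ :=
    daRun_inv hNr' hNh' hfilt hbij hdomh hdomr hstab ((∑ r : Fin n, (Lr' r).length) + 1)
  rw [← hs] at Ia Ib Ic
  -- every proposal to `h` comes from a resident on `Lh' h`, ranked no better than μ's partner
  have hkey : ∀ h r, (Lr' r).idxOf h < s.1 r →
      r ∈ Lh' h ∧ ∀ m, μh h = some m → (Lh' h).idxOf m ≤ (Lh' h).idxOf r := by
    intro h r hpr
    have hhm : h ∈ Lr' r := List.idxOf_lt_length_iff.1 (lt_of_lt_of_le hpr (Ia r))
    have hr : r ∈ Lh' h := hfilt r h hhm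
    refine ⟨hr, fun m hm => ?_⟩
    by_contra hcon
    push_neg at hcon
    have hrm : r ≠ m := by rintro rfl; omega
    refine hstab r h ⟨⟨hhm, fun y hy => ?_⟩, ⟨hr, fun y hy => ?_⟩⟩
    · rcases lt_trichotomy ((Lr' r).idxOf y) ((Lr' r).idxOf h) with h1 | h1 | h1
      · have h2 := Ic r y hy (by omega)
        have h3 := Ib y r h2
        omega
      · have : y = h := indexOf_inj (hdomr r y hy) h1
        subst this
        have := (hbij r y).1 hy
        rw [hm] at this
        cases this
        exact (hrm rfl).elim
      · exact h1
    · rw [hm] at hy; cases hy; exact hcon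
  -- rewrite the number of proposals of each resident as a cardinality
  have hcount : ∀ r, s.1 r =
      (Finset.univ.filter (fun h : Fin n => (Lr' r).idxOf h < s.1 r)).card := by
    intro r
    have hsub : Finset.univ.filter (fun h : Fin n => (Lr' r).idxOf h < s.1 r)
        = ((Lr' r).take (s.1 r)).toFinset := by
      ext h
      simp only [Finset.mem_filter, Finset.mem_univ, true_and, List.mem_toFinset]
      constructor
      · intro hlt
        have hmem : h ∈ Lr' r := List.idxOf_lt_length_iff.1 (lt_of_lt_of_le hlt (Ia r))
        have hlen : (Lr' r).idxOf h < ((Lr' r).take (s.1 r)).length := by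
          rw [List.length_take]
          exact lt_min hlt (List.idxOf_lt_length_iff.2 hmem)
        have : ((Lr' r).take (s.1 r))[(Lr' r).idxOf h] = h := by
          rw [List.getElem_take]
          exact List.getElem_idxOf (List.idxOf_lt_length_iff.2 hmem)
        exact this ▸ List.getElem_mem hlen
      · intro hmem
        obtain ⟨i, hi, hig⟩ := List.getElem_of_mem hmem
        have hi' : i < (Lr' r).length := by
          rw [List.length_take] at hi; omega
        have : (Lr' r)[i] = h := by rw [← hig, List.getElem_take]
        have : (Lr' r).idxOf h = i := this ▸ List.Nodup.idxOf_getElem (hNr' r) i hi'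
        rw [List.length_take] at hi
        omega
    rw [hsub, List.toFinset_card_of_nodup ((List.take_sublist _ _).nodup (hNr' r)),
      List.length_take]
    have := Ia r
    omega
  -- per-hospital bound on the number of proposals received
  have hbound : ∀ h : Fin n,
      (((Finset.univ.filter (fun r : Fin n => (Lr' r).idxOf h < s.1 r)).card : ℤ)) ≤
        (ρ h : ℤ) - orank (Lh' h) (μh h) + 1 := by
    intro h
    rcases hμ : μh h with _ | m
    · -- h unmatched in μ
      have hsub : Finset.univ.filter (fun r : Fin n => (Lr' r).idxOf h < s.1 r)
          ⊆ (Lh' h).toFinset := by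
        intro r hr
        rw [Finset.mem_filter] at hr
        exact List.mem_toFinset.2 (hkey h r hr.2).1
      have := Finset.card_le_card hsub
      rw [List.toFinset_card_of_nodup (hNh' h)] at this
      have h2 := hlen' h
      simp only [orank]
      push_cast
      omega
    · -- h matched to m in μ
      have hmmem : m ∈ Lh' h := hdomh h m hμ
      have hmlt : (Lh' h).idxOf m < (Lh' h).length := List.idxOf_lt_length_iff.2 hmmem
      have hsub : Finset.univ.filter (fun r : Fin n => (Lr' r).idxOf h < s.1 r)
          ⊆ ((Lh' h).drop ((Lh' h).idxOf m)).toFinset := by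
        intro r hr
        rw [Finset.mem_filter] at hr
        obtain ⟨hrm, hrk⟩ := hkey h r hr.2
        have hk := hrk m hμ
        have hrlt : (Lh' h).idxOf r < (Lh' h).length := List.idxOf_lt_length_iff.2 hrm
        rw [List.mem_toFinset]
        have hlen : (Lh' h).idxOf r - (Lh' h).idxOf m
            < ((Lh' h).drop ((Lh' h).idxOf m)).length := by
          rw [List.length_drop]; omega
        have : ((Lh' h).drop ((Lh' h).idxOf m))[(Lh' h).idxOf r - (Lh' h).idxOf m] = r := by
          rw [List.getElem_drop]
          have : (Lh' h).idxOf m + ((Lh' h).idxOf r - (Lh' h).idxOf m)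
              = (Lh' h).idxOf r := by omega
          simp_rw [this]
          exact List.getElem_idxOf hrlt
        exact this ▸ List.getElem_mem hlen
      have hcard := Finset.card_le_card hsub
      have hdn : ((Lh' h).drop ((Lh' h).idxOf m)).toFinset.card
          ≤ ((Lh' h).drop ((Lh' h).idxOf m)).length := List.toFinset_card_le _
      rw [List.length_drop] at hdn
      have h2 := hlen' h
      simp only [orank]
      push_cast
      omega
  -- put everything together by double counting
  calc ((∑ r : Fin n, s.1 r : ℕ) : ℤ)
      = ∑ r : Fin n, ((Finset.univ.filter
          (fun h : Fin n => (Lr' r).idxOf h < s.1 r)).card : ℤ) := by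
        push_cast
        exact_mod_cast congrArg (Nat.cast (R := ℤ)) (Finset.sum_congr rfl fun r _ => hcount r)
    _ = ∑ h : Fin n, ((Finset.univ.filter
          (fun r : Fin n => (Lr' r).idxOf h < s.1 r)).card : ℤ) := by
        push_cast
        simp_rw [Finset.card_filter]
        push_cast
        exact Finset.sum_comm
    _ ≤ ∑ h : Fin n, ((ρ h : ℤ) - orank (Lh' h) (μh h) + 1) :=
        Finset.sum_le_sum fun h _ => hbound h
end
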